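/- Let R be a commutative ring, let c ≥ 1 be an integer, and let x = (x_0,…,x_p) ∈ R^{p+1}, y = (y_0,…,y_q) ∈ R^{q+1}. Then T_c(x)·T_{c+p}(y) = T_c(y)·T_{c+q}(x) as c × (c+p+q) matrices. Consequently, the c × (2c+p+q) matrix B = [T_c(x) | T_c(y)] (horizontal block concatenation) and the (2c+p+q) × (c+p+q) matrix A = [T_{c+p}(y) ; −T_{c+q}(x)] (vertical block concatenation) satisfy B·A = 0. -/

import Mathlib

open Finset

section bmHelpers
variable {R : Type*} [CommRing R]

private lemma bm_collapse (m K q : ℕ) (f : ℕ → R) (hf : ∀ s, q < s → f s = 0) :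
    (∑ s ∈ range (q + 1), if m + s = K then f s else 0) =
      if m ≤ K then f (K - m) else 0 := by
  rcases le_or_gt m K with h | h
  · rcases le_or_gt (K - m) q with h2 | h2
    · rw [if_pos h, Finset.sum_eq_single (K - m)]
      · rw [if_pos (by omega)]
      · intro s hs hne; rw [if_neg (by omega)]
      · intro hmem; exact absurd (mem_range.mpr (by omega)) hmem
    · rw [if_pos h, hf _ h2]
      refine Finset.sum_eq_zero fun s hs => ?_
      rw [if_neg (by simp only [mem_range] at hs; omega)]
  · rw [if_neg (by omega)]
    exact Finset.sum_eq_zero fun s hs => if_neg (by omega)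

private lemma bm_outer (N i p : ℕ) (hip : i + p < N) (x' : ℕ → R)
    (hx : ∀ t, p < t → x' t = 0) (cfun : ℕ → R) :
    (∑ j ∈ range N, (if i ≤ j then x' (j - i) else 0) * cfun j)
      = ∑ t ∈ range (p + 1), x' t * cfun (i + t) := by
  have h1 : (∑ j ∈ Finset.Ico i (i + p + 1), (if i ≤ j then x' (j - i) else 0) * cfun j)
      = ∑ t ∈ range (p + 1), x' t * cfun (i + t) := by
    rw [Finset.sum_Ico_eq_sum_range]
    rw [show i + p + 1 - i = p + 1 from by omega]
    refine Finset.sum_congr rfl fun t ht => ?_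
    rw [if_pos (by omega), Nat.add_sub_cancel_left]
  rw [← h1]
  symm
  apply Finset.sum_subset
  · intro j hj; simp only [Finset.mem_Ico] at hj; simp only [mem_range]; omega
  · intro j hj hnot
    simp only [Finset.mem_Ico, not_and, not_lt] at hnot
    rcases le_or_gt i j with hij | hij
    · rw [if_pos hij, hx _ (by omega), zero_mul]
    · rw [if_neg (by omega), zero_mul]

private lemma bm_prod_entry (c p q : ℕ) (x' y' : ℕ → R)
    (hx : ∀ t, p < t → x' t = 0) (hy : ∀ s, q < s → y' s = 0)
    (i k : ℕ) (hi : i < c) :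
    (∑ j ∈ range (c + p),
        (if i ≤ j then x' (j - i) else 0) * (if j ≤ k then y' (k - j) else 0))
      = ∑ t ∈ range (p + 1), ∑ s ∈ range (q + 1),
          if i + t + s = k then x' t * y' s else 0 := by
  rw [bm_outer (c + p) i p (by omega) x' hx]
  refine Finset.sum_congr rfl fun t ht => ?_
  have : (∑ s ∈ range (q + 1), if i + t + s = k then x' t * y' s else 0)
      = x' t * ∑ s ∈ range (q + 1), (if (i + t) + s = k then y' s else 0) := by
    rw [Finset.mul_sum]
    exact Finset.sum_congr rfl fun s hs => by rw [mul_ite, mul_zero]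
  rw [this, bm_collapse (i + t) k q y' hy]

end bmHelpers

/-- The `m × (m+l)` band (Toeplitz) matrix associated to a tuple `z = (z_0, …, z_l)`:
its `(i,j)` entry is `z_{j-i}` if `0 ≤ j - i ≤ l` and `0` otherwise. -/
def bandMatrix {R : Type*} [CommRing R] (m l : ℕ) (z : Fin (l + 1) → R) :
    Matrix (Fin m) (Fin (m + l)) R :=
  Matrix.of fun i j =>
    if h : (i : ℕ) ≤ (j : ℕ) ∧ (j : ℕ) - (i : ℕ) ≤ l then
      z ⟨(j : ℕ) - (i : ℕ), by omega⟩
    else 0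

section bmHelpers2
variable {R : Type*} [CommRing R]

/-- extend a tuple to `ℕ` by zero -/
private def bm_ext {l : ℕ} (z : Fin (l + 1) → R) : ℕ → R :=
  fun t => if h : t < l + 1 then z ⟨t, h⟩ else 0

private lemma bm_ext_zero {l : ℕ} (z : Fin (l + 1) → R) (t : ℕ) (ht : l < t) :
    bm_ext z t = 0 := by
  unfold bm_ext; rw [dif_neg (by omega)]

private lemma bm_apply (m l : ℕ) (z : Fin (l + 1) → R) (i : Fin m) (j : Fin (m + l)) :
    bandMatrix m l z i j =
      if (i : ℕ) ≤ (j : ℕ) then bm_ext z ((j : ℕ) - (i : ℕ)) else 0 := by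
  unfold bandMatrix bm_ext
  simp only [Matrix.of_apply]
  split_ifs with h1 h2 h3 <;> first | rfl | omega

private lemma bm_entry (c p q : ℕ) (x : Fin (p + 1) → R) (y : Fin (q + 1) → R)
    (i : ℕ) (hi : i < c) (k : ℕ) :
    (∑ j ∈ range (c + p),
        (if i ≤ j then bm_ext x (j - i) else 0) * (if j ≤ k then bm_ext y (k - j) else 0))
      = ∑ t ∈ range (p + 1), ∑ s ∈ range (q + 1),
          if i + t + s = k then bm_ext x t * bm_ext y s else 0 :=
  bm_prod_entry c p q (bm_ext x) (bm_ext y) (bm_ext_zero x) (bm_ext_zero y) i k hi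

end bmHelpers2

/-- `T_c(x) · T_{c+p}(y) = T_c(y) · T_{c+q}(x)` as `c × (c+p+q)` matrices,
and consequently the horizontal block matrix `B = [T_c(x) | T_c(y)]` and the vertical
block matrix `A = [T_{c+p}(y) ; −T_{c+q}(x)]` satisfy `B · A = 0`. -/
theorem bandMatrix_commute_and_mul_eq_zero {R : Type*} [CommRing R]
    (c p q : ℕ) (hc : 1 ≤ c) (x : Fin (p + 1) → R) (y : Fin (q + 1) → R) :
    bandMatrix c p x * bandMatrix (c + p) q y =
      (bandMatrix c q y * bandMatrix (c + q) p x).submatrix id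
        (Fin.cast (by omega : c + p + q = c + q + p)) ∧
    Matrix.fromCols (bandMatrix c p x) (bandMatrix c q y) *
      Matrix.fromRows (bandMatrix (c + p) q y)
        (-(bandMatrix (c + q) p x).submatrix id
            (Fin.cast (by omega : c + p + q = c + q + p))) = 0 := by
  have key : bandMatrix c p x * bandMatrix (c + p) q y =
      (bandMatrix c q y * bandMatrix (c + q) p x).submatrix id
        (Fin.cast (by omega : c + p + q = c + q + p)) := by
    ext i k
    simp only [Matrix.submatrix_apply, id_eq, Matrix.mul_apply, bm_apply]
    have coe_cast : ((Fin.cast (by omega : c + p + q = c + q + p) k : Fin (c + q + p)) : ℕ)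
        = (k : ℕ) := rfl
    rw [coe_cast]
    have hL : (∑ j : Fin (c + p),
        (if (i : ℕ) ≤ (j : ℕ) then bm_ext x ((j : ℕ) - (i : ℕ)) else 0) *
        (if (j : ℕ) ≤ (k : ℕ) then bm_ext y ((k : ℕ) - (j : ℕ)) else 0))
        = ∑ j ∈ Finset.range (c + p),
        (if (i : ℕ) ≤ j then bm_ext x (j - (i : ℕ)) else 0) *
        (if j ≤ (k : ℕ) then bm_ext y ((k : ℕ) - j) else 0) :=
      Fin.sum_univ_eq_sum_range (fun j => (if (i : ℕ) ≤ j then bm_ext x (j - (i : ℕ)) else 0) *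
        (if j ≤ (k : ℕ) then bm_ext y ((k : ℕ) - j) else 0)) (c + p)
    have hR : (∑ j : Fin (c + q),
        (if (i : ℕ) ≤ (j : ℕ) then bm_ext y ((j : ℕ) - (i : ℕ)) else 0) *
        (if (j : ℕ) ≤ (k : ℕ) then bm_ext x ((k : ℕ) - (j : ℕ)) else 0))
        = ∑ j ∈ Finset.range (c + q),
        (if (i : ℕ) ≤ j then bm_ext y (j - (i : ℕ)) else 0) *
        (if j ≤ (k : ℕ) then bm_ext x ((k : ℕ) - j) else 0) :=
      Fin.sum_univ_eq_sum_range (fun j => (if (i : ℕ) ≤ j then bm_ext y (j - (i : ℕ)) else 0) *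
        (if j ≤ (k : ℕ) then bm_ext x ((k : ℕ) - j) else 0)) (c + q)
    rw [hL, hR, bm_entry c p q x y (i : ℕ) i.isLt (k : ℕ),
        bm_entry c q p y x (i : ℕ) i.isLt (k : ℕ), Finset.sum_comm]
    refine Finset.sum_congr rfl fun t ht => Finset.sum_congr rfl fun s hs => ?_
    rw [show (i : ℕ) + t + s = (i : ℕ) + s + t from by omega, mul_comm]
  refine ⟨key, ?_⟩
  have sub_mul : ∀ (M : Matrix (Fin c) (Fin (c + q)) R)
      (N : Matrix (Fin (c + q)) (Fin (c + q + p)) R),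
      (M * N).submatrix id (Fin.cast (by omega : c + p + q = c + q + p))
        = M * N.submatrix id (Fin.cast (by omega : c + p + q = c + q + p)) := by
    intro M N
    ext i k
    simp [Matrix.mul_apply, Matrix.submatrix_apply]
  rw [Matrix.fromCols_mul_fromRows, Matrix.mul_neg, key, sub_mul]
  exact add_neg_cancel _
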